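/- Under the same stationarity assumption: ((n+2)(n+1+2B+2S) - 4S)·E[1², 0^n] = n(n+2Bb₀-1)·E[1², 0^{n-1}] + 2(1+2Bb₁)·E[1, 0^n] + (n+2)·2S·E[1², 0^{n+1}] for every n ≥ 1 (and for n = 0 with the first right-hand term absent). -/

import Mathlib

open MeasureTheory Real

lemma WF_ae_mem_Icc {μ : Measure ℝ} (hsupp : μ (Set.Icc (0:ℝ) 1)ᶜ = 0) :
    ∀ᵐ z ∂μ, z ∈ Set.Icc (0:ℝ) 1 := by
  rw [ae_iff]
  exact hsupp

lemma WF_integrable_of_cont {μ : Measure ℝ} [IsProbabilityMeasure μ]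
    (hsupp : μ (Set.Icc (0:ℝ) 1)ᶜ = 0) (f : ℝ → ℝ) (hc : Continuous f) :
    Integrable f μ := by
  obtain ⟨C, hC⟩ := (isCompact_Icc (a := (0:ℝ)) (b := 1)).exists_bound_of_continuousOn
    hc.continuousOn
  exact (integrable_const C).mono' hc.aestronglyMeasurable
    ((WF_ae_mem_Icc hsupp).mono fun z hz => hC z hz)

lemma WF_hasDerivAt_monomial (a k : ℕ) (z : ℝ) :
    HasDerivAt (fun z : ℝ => z ^ a * (1 - z) ^ k)
      ((a : ℝ) * z ^ (a-1) * (1 - z) ^ k - (k : ℝ) * z ^ a * (1 - z) ^ (k-1)) z := by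
  have h1 : HasDerivAt (fun z : ℝ => (1 - z) ^ k) ((k:ℝ) * (1-z)^(k-1) * (0 - 1)) z :=
    ((hasDerivAt_const z 1).sub (hasDerivAt_id z)).pow k
  have h2 : HasDerivAt (fun z : ℝ => z ^ a * (1 - z) ^ k) _ z := (hasDerivAt_pow a z).mul h1
  convert h2 using 1
  ring

lemma WF_deriv1 (m : ℕ) :
    deriv (fun z : ℝ => z ^ 2 * (1 - z) ^ (m + 1))
      = fun z : ℝ => 2 * (z ^ 1 * (1 - z) ^ (m+1)) - ((m:ℝ)+1) * (z ^ 2 * (1 - z) ^ m) := by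
  funext z
  rw [(WF_hasDerivAt_monomial 2 (m+1) z).deriv]
  norm_num
  ring

lemma WF_deriv2 (m : ℕ) :
    deriv (deriv (fun z : ℝ => z ^ 2 * (1 - z) ^ (m + 1)))
      = fun z : ℝ => 2 * (1 - z) ^ (m+1) - 2*((m:ℝ)+1)*z*(1-z)^m
          - ((m:ℝ)+1) * (2*z*(1-z)^m - (m:ℝ)*(z^2*(1-z)^(m-1))) := by
  rw [WF_deriv1]
  funext z
  have h := (HasDerivAt.const_mul 2 (WF_hasDerivAt_monomial 1 (m+1) z)).sub
    (HasDerivAt.const_mul ((m:ℝ)+1) (WF_hasDerivAt_monomial 2 m z))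
  rw [(show HasDerivAt (fun y : ℝ => 2 * (y ^ 1 * (1 - y) ^ (m + 1)) - ((m:ℝ) + 1) * (y ^ 2 * (1 - y) ^ m)) _ z from h).deriv]
  norm_num
  ring

lemma WF_point_id (B b₀ b₁ S : ℝ) (hsum : b₀ + b₁ = 1) (m : ℕ) (z : ℝ) :
    (B * b₁ * (1 - z) - B * b₀ * z + S * z * (1 - z)) *
        (2 * (z ^ 1 * (1 - z) ^ (m+1)) - ((m:ℝ)+1) * (z ^ 2 * (1 - z) ^ m))
      + 1 / 2 * (z * (1 - z)) *
        (2 * (1 - z) ^ (m+1) - 2*((m:ℝ)+1)*z*(1-z)^m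
          - ((m:ℝ)+1) * (2*z*(1-z)^m - (m:ℝ)*(z^2*(1-z)^(m-1))))
    = (1 + 2*B*b₁) * (z * (1 - z) ^ (m+1))
      + (1/2*((m:ℝ)+1)*(((m:ℝ)+1)+2*B*b₀-1)) * (z ^ 2 * (1 - z) ^ m)
      + (1/2*(((m:ℝ)+1)+2)*(2*S)) * (z ^ 2 * (1 - z) ^ (m+2))
      - (1/2*((((m:ℝ)+1)+2)*(((m:ℝ)+1)+1+2*B+2*S)-4*S)) * (z ^ 2 * (1 - z) ^ (m+1)) := by
  have hb : b₀ = 1 - b₁ := by linarith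
  subst hb
  rcases m with _ | k
  · norm_num; ring
  · simp only [Nat.add_sub_cancel]
    push_cast
    ring

lemma WF_point_id0 (B b₀ b₁ S : ℝ) (hsum : b₀ + b₁ = 1) (z : ℝ) :
    (B * b₁ * (1 - z) - B * b₀ * z + S * z * (1 - z)) * (2 * z)
      + 1 / 2 * (z * (1 - z)) * 2
    = (1 + 2*B*b₁) * z + (1/2*(2*(2*S))) * (z ^ 2 * (1 - z))
      - (1/2*(2*(1+2*B+2*S)-4*S)) * z ^ 2 := by
  have hb : b₀ = 1 - b₁ := by linarith
  subst hb
  ring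

/-- Mixed moment recursion for a stationary distribution of the Wright-Fisher
diffusion: `((n+2)(n+1+2B+2S) - 4S)·E[1²,0^n] = n(n+2Bb₀-1)·E[1²,0^{n-1}]
+ 2(1+2Bb₁)·E[1,0^n] + (n+2)·2S·E[1²,0^{n+1}]`, for `n ≥ 1`, and for `n = 0`
with the first right-hand term absent. -/
theorem WF_moment_recursion_three (B b₀ b₁ S : ℝ) (hB : 0 ≤ B) (hS : 0 ≤ S)
    (hb₀ : 0 ≤ b₀) (hb₁ : 0 ≤ b₁) (hsum : b₀ + b₁ = 1)
    (μ : Measure ℝ) [IsProbabilityMeasure μ] (hsupp : μ (Set.Icc (0 : ℝ) 1)ᶜ = 0)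
    (hstat : ∀ f : ℝ → ℝ, ContDiff ℝ 2 f →
      ∫ z, ((B * b₁ * (1 - z) - B * b₀ * z + S * z * (1 - z)) * deriv f z
          + 1 / 2 * (z * (1 - z)) * deriv (deriv f) z) ∂μ = 0) :
    (∀ m : ℕ,
      ((((m : ℝ) + 1) + 2) * (((m : ℝ) + 1) + 1 + 2 * B + 2 * S) - 4 * S) *
          ∫ z, z ^ 2 * (1 - z) ^ (m + 1) ∂μ
        = ((m : ℝ) + 1) * (((m : ℝ) + 1) + 2 * B * b₀ - 1) * ∫ z, z ^ 2 * (1 - z) ^ m ∂μ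
          + 2 * (1 + 2 * B * b₁) * ∫ z, z * (1 - z) ^ (m + 1) ∂μ
          + (((m : ℝ) + 1) + 2) * (2 * S) * ∫ z, z ^ 2 * (1 - z) ^ (m + 2) ∂μ) ∧
    ((2 : ℝ) * (1 + 2 * B + 2 * S) - 4 * S) * ∫ z, z ^ 2 ∂μ
      = 2 * (1 + 2 * B * b₁) * ∫ z, z ∂μ
        + 2 * (2 * S) * ∫ z, z ^ 2 * (1 - z) ∂μ := by
  constructor
  · intro m
    have hf : ContDiff ℝ 2 (fun z : ℝ => z ^ 2 * (1 - z) ^ (m + 1)) :=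
      (contDiff_id.pow 2).mul ((contDiff_const.sub contDiff_id).pow (m+1))
    have key := hstat _ hf
    rw [WF_deriv2 m, WF_deriv1 m] at key
    simp only [WF_point_id B b₀ b₁ S hsum m] at key
    have i1 : Integrable (fun z : ℝ => z * (1 - z) ^ (m+1)) μ :=
      WF_integrable_of_cont hsupp _
        (continuous_id.mul ((continuous_const.sub continuous_id).pow (m+1)))
    have i2 : Integrable (fun z : ℝ => z ^ 2 * (1 - z) ^ m) μ :=
      WF_integrable_of_cont hsupp _
        ((continuous_pow 2).mul ((continuous_const.sub continuous_id).pow m))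
    have i3 : Integrable (fun z : ℝ => z ^ 2 * (1 - z) ^ (m+2)) μ :=
      WF_integrable_of_cont hsupp _
        ((continuous_pow 2).mul ((continuous_const.sub continuous_id).pow (m+2)))
    have i4 : Integrable (fun z : ℝ => z ^ 2 * (1 - z) ^ (m+1)) μ :=
      WF_integrable_of_cont hsupp _
        ((continuous_pow 2).mul ((continuous_const.sub continuous_id).pow (m+1)))
    have j1 := i1.const_mul (1 + 2*B*b₁)
    have j2 := i2.const_mul (1/2*((m:ℝ)+1)*(((m:ℝ)+1)+2*B*b₀-1))
    have j3 := i3.const_mul (1/2*(((m:ℝ)+1)+2)*(2*S))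
    have j4 := i4.const_mul (1/2*((((m:ℝ)+1)+2)*(((m:ℝ)+1)+1+2*B+2*S)-4*S))
    have e12 : Integrable (fun z : ℝ => (1 + 2*B*b₁) * (z * (1 - z) ^ (m+1))
        + 1/2*((m:ℝ)+1)*(((m:ℝ)+1)+2*B*b₀-1) * (z ^ 2 * (1 - z) ^ m)) μ := by
      exact j1.add j2
    have e123 : Integrable (fun z : ℝ => ((1 + 2*B*b₁) * (z * (1 - z) ^ (m+1))
        + 1/2*((m:ℝ)+1)*(((m:ℝ)+1)+2*B*b₀-1) * (z ^ 2 * (1 - z) ^ m))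
        + 1/2*(((m:ℝ)+1)+2)*(2*S) * (z ^ 2 * (1 - z) ^ (m+2))) μ := by
      exact e12.add j3
    rw [integral_sub e123 j4, integral_add e12 j3, integral_add j1 j2,
      integral_const_mul, integral_const_mul, integral_const_mul, integral_const_mul] at key
    linear_combination (-2 : ℝ) * key
  · have hf : ContDiff ℝ 2 (fun z : ℝ => z ^ 2) := contDiff_id.pow 2
    have hd1 : deriv (fun z : ℝ => z ^ 2) = fun z : ℝ => 2 * z := by
      funext z
      rw [((hasDerivAt_pow 2 z)).deriv]
      norm_num
    have hd2 : deriv (deriv (fun z : ℝ => z ^ 2)) = fun _ : ℝ => (2 : ℝ) := by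
      rw [hd1]
      funext z
      have h2 : HasDerivAt (fun z : ℝ => 2 * z) 2 z := by
        simpa using (hasDerivAt_id z).const_mul (2:ℝ)
      rw [h2.deriv]
    have key := hstat _ hf
    rw [hd2, hd1] at key
    simp only [WF_point_id0 B b₀ b₁ S hsum] at key
    have i1 : Integrable (fun z : ℝ => z) μ :=
      WF_integrable_of_cont hsupp _ continuous_id
    have i2 : Integrable (fun z : ℝ => z ^ 2 * (1 - z)) μ :=
      WF_integrable_of_cont hsupp _
        ((continuous_pow 2).mul (continuous_const.sub continuous_id))
    have i3 : Integrable (fun z : ℝ => z ^ 2) μ :=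
      WF_integrable_of_cont hsupp _ (continuous_pow 2)
    have j1 := i1.const_mul (1 + 2*B*b₁)
    have j2 := i2.const_mul (1/2*(2*(2*S)))
    have j3 := i3.const_mul (1/2*(2*(1+2*B+2*S)-4*S))
    have e12 : Integrable (fun z : ℝ => (1 + 2*B*b₁) * z
        + 1/2*(2*(2*S)) * (z ^ 2 * (1 - z))) μ := by
      exact j1.add j2
    rw [integral_sub e12 j3, integral_add j1 j2,
      integral_const_mul, integral_const_mul, integral_const_mul] at key
    linear_combination (-2 : ℝ) * key
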